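/- Assume the Halpern setting: Q* : S × A → ℝ and g* ∈ ℝ satisfy 𝒯 Q* = Q* + g* • 1, ε ≥ 0, n ∈ ℕ, sequences Q, T : ℕ → (S × A → ℝ) satisfy Q k = (2/(k+2)) • Q 0 + (k/(k+2)) • T (k−1) for all 1 ≤ k ≤ n and ‖T k − 𝒯 (Q k)‖∞ ≤ ε for all 0 ≤ k ≤ n; assume additionally Sp(T k − T (k−1)) ≤ Sp(Q k − Q (k−1)) for all 1 ≤ k ≤ n. Define ρ_j = 2 * Sp(Q 0 − Q*) + (2/3) * ε * j. Then for every k with 1 ≤ k ≤ n: Sp(Q k − Q (k−1)) ≤ (2 / (k*(k+1))) * ∑_{i=1}^{k} ρ_{i+2}. -/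

import Mathlib

open Finset

noncomputable def supNorm {X : Type*} [Fintype X] [Nonempty X] (v : X → ℝ) : ℝ :=
  Finset.univ.sup' Finset.univ_nonempty fun x => |v x|

noncomputable def spanSN {X : Type*} [Fintype X] [Nonempty X] (v : X → ℝ) : ℝ :=
  (Finset.univ.sup' Finset.univ_nonempty v) - (Finset.univ.inf' Finset.univ_nonempty v)

section span
variable {X : Type*} [Fintype X] [Nonempty X]

lemma le_sSup' (v : X → ℝ) (x : X) : v x ≤ univ.sup' univ_nonempty v :=
  le_sup' v (mem_univ x)

lemma sInf'_le (v : X → ℝ) (x : X) : univ.inf' univ_nonempty v ≤ v x :=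
  inf'_le v (mem_univ x)

lemma spanSN_nonneg (v : X → ℝ) : 0 ≤ spanSN v := by
  obtain ⟨x⟩ := ‹Nonempty X›
  have h1 := le_sSup' v x
  have h2 := sInf'_le v x
  unfold spanSN; linarith

lemma spanSN_add_le (u v : X → ℝ) : spanSN (u + v) ≤ spanSN u + spanSN v := by
  unfold spanSN
  have h1 : univ.sup' univ_nonempty (u + v) ≤
      univ.sup' univ_nonempty u + univ.sup' univ_nonempty v := by
    apply sup'_le; intro x _
    exact add_le_add (le_sSup' u x) (le_sSup' v x)
  have h2 : univ.inf' univ_nonempty u + univ.inf' univ_nonempty v ≤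
      univ.inf' univ_nonempty (u + v) := by
    apply le_inf'; intro x _
    exact add_le_add (sInf'_le u x) (sInf'_le v x)
  linarith

lemma sup'_neg_eq (v : X → ℝ) :
    univ.sup' univ_nonempty (fun x => -(v x)) = - univ.inf' univ_nonempty v := by
  apply le_antisymm
  · apply sup'_le; intro x _
    exact neg_le_neg (sInf'_le v x)
  · rw [neg_le]
    apply le_inf'; intro x _
    rw [neg_le]
    exact le_sSup' (fun x => -(v x)) x

lemma inf'_neg_eq (v : X → ℝ) :
    univ.inf' univ_nonempty (fun x => -(v x)) = - univ.sup' univ_nonempty v := by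
  have := sup'_neg_eq (fun x => -(v x))
  simp only [neg_neg] at this
  linarith

lemma spanSN_neg (v : X → ℝ) : spanSN (-v) = spanSN v := by
  unfold spanSN
  have h1 : univ.sup' univ_nonempty (-v) = univ.sup' univ_nonempty (fun x => -(v x)) := rfl
  have h2 : univ.inf' univ_nonempty (-v) = univ.inf' univ_nonempty (fun x => -(v x)) := rfl
  rw [h1, h2, sup'_neg_eq, inf'_neg_eq]; ring

lemma spanSN_smul_le (c : ℝ) (hc : 0 ≤ c) (v : X → ℝ) : spanSN (c • v) ≤ c * spanSN v := by
  have h1 : univ.sup' univ_nonempty (c • v) ≤ c * univ.sup' univ_nonempty v := by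
    apply sup'_le; intro x _
    exact mul_le_mul_of_nonneg_left (le_sSup' v x) hc
  have h2 : c * univ.inf' univ_nonempty v ≤ univ.inf' univ_nonempty (c • v) := by
    apply le_inf'; intro x _
    exact mul_le_mul_of_nonneg_left (sInf'_le v x) hc
  have : c * spanSN v = c * univ.sup' univ_nonempty v - c * univ.inf' univ_nonempty v := by
    unfold spanSN; ring
  unfold spanSN; rw [this] at *; linarith

lemma spanSN_const (c : ℝ) : spanSN (fun _ : X => c) = 0 := by
  unfold spanSN; simp

lemma spanSN_le_two_supNorm (v : X → ℝ) : spanSN v ≤ 2 * supNorm v := by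
  have h1 : univ.sup' univ_nonempty v ≤ supNorm v := by
    apply sup'_le; intro x _
    exact le_trans (le_abs_self _) (le_sSup' (fun x => |v x|) x)
  have h2 : -(supNorm v) ≤ univ.inf' univ_nonempty v := by
    apply le_inf'; intro x _
    have := le_sSup' (fun x => |v x|) x
    have := neg_abs_le (v x)
    unfold supNorm; linarith
  unfold spanSN; unfold supNorm at *; linarith

end span

noncomputable def sigma' {S A : Type*} [Fintype S] (P : S → A → Set (S → ℝ))
    (h : S → ℝ) (s : S) (a : A) : ℝ :=
  sInf {x : ℝ | ∃ p ∈ P s a, x = ∑ s', p s' * h s'}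

noncomputable def bellman {S A : Type*} [Fintype S] [Fintype A] [Nonempty A]
    (P : S → A → Set (S → ℝ)) (r : S → A → ℝ) (Q : S × A → ℝ) : S × A → ℝ :=
  fun sa => r sa.1 sa.2 +
    sigma' P (fun s' => Finset.univ.sup' Finset.univ_nonempty fun a' => Q (s', a')) sa.1 sa.2

section bell
variable {S A : Type*} [Fintype S] [Fintype A] [Nonempty S] [Nonempty A]
  (P : S → A → Set (S → ℝ))
  (hne : ∀ s a, (P s a).Nonempty)
  (hsub : ∀ s a, P s a ⊆ stdSimplex ℝ S)

set_option linter.unusedSectionVars false in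
lemma sum_ge_inf (h : S → ℝ) {p : S → ℝ} (hp : p ∈ stdSimplex ℝ S) :
    univ.inf' univ_nonempty h ≤ ∑ s', p s' * h s' := by
  obtain ⟨hp1, hp2⟩ := hp
  calc univ.inf' univ_nonempty h = ∑ s', p s' * univ.inf' univ_nonempty h := by
        rw [← Finset.sum_mul, hp2, one_mul]
    _ ≤ ∑ s', p s' * h s' :=
        Finset.sum_le_sum fun i _ => mul_le_mul_of_nonneg_left (sInf'_le h i) (hp1 i)

lemma sum_le_sup (h : S → ℝ) {p : S → ℝ} (hp : p ∈ stdSimplex ℝ S) :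
    ∑ s', p s' * h s' ≤ univ.sup' univ_nonempty h := by
  obtain ⟨hp1, hp2⟩ := hp
  calc ∑ s', p s' * h s' ≤ ∑ s', p s' * univ.sup' univ_nonempty h :=
        Finset.sum_le_sum fun i _ => mul_le_mul_of_nonneg_left (le_sSup' h i) (hp1 i)
    _ = univ.sup' univ_nonempty h := by rw [← Finset.sum_mul, hp2, one_mul]

set_option linter.unusedSectionVars false
include hne hsub

lemma sigma_bddBelow (h : S → ℝ) (s : S) (a : A) :
    BddBelow {x : ℝ | ∃ p ∈ P s a, x = ∑ s', p s' * h s'} := by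
  refine ⟨univ.inf' univ_nonempty h, ?_⟩
  rintro x ⟨p, hp, rfl⟩
  exact sum_ge_inf h (hsub s a hp)

lemma sigma_set_nonempty (h : S → ℝ) (s : S) (a : A) :
    Set.Nonempty {x : ℝ | ∃ p ∈ P s a, x = ∑ s', p s' * h s'} := by
  obtain ⟨p, hp⟩ := hne s a
  exact ⟨_, p, hp, rfl⟩

lemma sigma_sub_le (h h' : S → ℝ) (s : S) (a : A) :
    sigma' P h s a - sigma' P h' s a ≤
      univ.sup' univ_nonempty (fun s' => h s' - h' s') := by
  set M := univ.sup' (univ_nonempty (α := S)) (fun s' => h s' - h' s') with hM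
  rw [sub_le_iff_le_add, ← sub_le_iff_le_add']
  unfold sigma'
  apply le_csInf (sigma_set_nonempty P hne hsub h' s a)
  rintro x ⟨p, hp, rfl⟩
  rw [sub_le_iff_le_add]
  have h1 : sInf {x : ℝ | ∃ p ∈ P s a, x = ∑ s', p s' * h s'} ≤ ∑ s', p s' * h s' :=
    csInf_le (sigma_bddBelow P hne hsub h s a) ⟨p, hp, rfl⟩
  have h2 : ∑ s', p s' * (h s' - h' s') ≤ M := sum_le_sup _ (hsub s a hp)
  have h3 : ∑ s', p s' * (h s' - h' s') = ∑ s', p s' * h s' - ∑ s', p s' * h' s' := by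
    rw [← Finset.sum_sub_distrib]
    exact Finset.sum_congr rfl fun i _ => by ring
  linarith

lemma sigma_sub_ge (h h' : S → ℝ) (s : S) (a : A) :
    univ.inf' univ_nonempty (fun s' => h s' - h' s') ≤
      sigma' P h s a - sigma' P h' s a := by
  have := sigma_sub_le P hne hsub h' h s a
  have heq : univ.sup' (univ_nonempty (α := S)) (fun s' => h' s' - h s')
      = - univ.inf' univ_nonempty (fun s' => h s' - h' s') := by
    rw [← sup'_neg_eq]
    exact Finset.sup'_congr _ rfl fun x _ => by ring
  rw [heq] at this
  linarith

lemma bellman_nonexpansive (r : S → A → ℝ) (Q Q' : S × A → ℝ) :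
    spanSN (bellman P r Q - bellman P r Q') ≤ spanSN (Q - Q') := by
  set V : S → ℝ := fun s => univ.sup' univ_nonempty fun a' => Q (s, a') with hV
  set V' : S → ℝ := fun s => univ.sup' univ_nonempty fun a' => Q' (s, a') with hV'
  have hpt : ∀ sa : S × A, (bellman P r Q - bellman P r Q') sa =
      sigma' P V sa.1 sa.2 - sigma' P V' sa.1 sa.2 := by
    intro sa; simp [bellman]; rfl
  -- bounds on V - V' by Q - Q'
  have hup : ∀ s : S, V s - V' s ≤ univ.sup' univ_nonempty (Q - Q') := by
    intro s
    obtain ⟨a, _, ha⟩ := Finset.exists_mem_eq_sup' (univ_nonempty (α := A))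
      (fun a' => Q (s, a'))
    have h1 : V s = Q (s, a) := ha
    have h2 : Q' (s, a) ≤ V' s := le_sSup' (fun a' => Q' (s, a')) a
    have h3 : Q (s, a) - Q' (s, a) ≤ univ.sup' univ_nonempty (Q - Q') :=
      le_sSup' (Q - Q') (s, a)
    rw [h1]; linarith
  have hlow : ∀ s : S, univ.inf' univ_nonempty (Q - Q') ≤ V s - V' s := by
    intro s
    obtain ⟨a, _, ha⟩ := Finset.exists_mem_eq_sup' (univ_nonempty (α := A))
      (fun a' => Q' (s, a'))
    have h1 : V' s = Q' (s, a) := ha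
    have h2 : Q (s, a) ≤ V s := le_sSup' (fun a' => Q (s, a')) a
    have h3 : univ.inf' univ_nonempty (Q - Q') ≤ Q (s, a) - Q' (s, a) :=
      sInf'_le (Q - Q') (s, a)
    rw [h1]; linarith
  have hsup : univ.sup' univ_nonempty (bellman P r Q - bellman P r Q') ≤
      univ.sup' univ_nonempty (Q - Q') := by
    apply sup'_le; intro sa _
    rw [hpt sa]
    calc sigma' P V sa.1 sa.2 - sigma' P V' sa.1 sa.2
        ≤ univ.sup' univ_nonempty (fun s' => V s' - V' s') :=
          sigma_sub_le P hne hsub V V' sa.1 sa.2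
      _ ≤ univ.sup' univ_nonempty (Q - Q') := sup'_le _ _ fun s _ => hup s
  have hinf : univ.inf' univ_nonempty (Q - Q') ≤
      univ.inf' univ_nonempty (bellman P r Q - bellman P r Q') := by
    apply le_inf'; intro sa _
    rw [hpt sa]
    calc univ.inf' univ_nonempty (Q - Q')
        ≤ univ.inf' univ_nonempty (fun s' => V s' - V' s') := le_inf' _ _ fun s _ => hlow s
      _ ≤ sigma' P V sa.1 sa.2 - sigma' P V' sa.1 sa.2 :=
          sigma_sub_ge P hne hsub V V' sa.1 sa.2
  unfold spanSN; linarith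

end bell

set_option maxHeartbeats 1000000 in
/-- Paper's Lemma A3: bound on consecutive-iterate differences of Robust Halpern
Iteration with inexact operator evaluations. -/
theorem stmt16 {S A : Type*} [Fintype S] [Fintype A] [Nonempty S] [Nonempty A]
    (P : S → A → Set (S → ℝ))
    (hne : ∀ s a, (P s a).Nonempty)
    (hsub : ∀ s a, P s a ⊆ stdSimplex ℝ S)
    (r : S → A → ℝ)
    (Qstar : S × A → ℝ) (gstar : ℝ)
    (hstar : bellman P r Qstar = Qstar + gstar • (1 : S × A → ℝ))
    (ε : ℝ) (hε : 0 ≤ ε) (n : ℕ)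
    (Q T : ℕ → (S × A → ℝ))
    (hrec : ∀ k, 1 ≤ k → k ≤ n →
      Q k = (2 / ((k : ℝ) + 2)) • Q 0 + ((k : ℝ) / ((k : ℝ) + 2)) • T (k - 1))
    (happrox : ∀ k ≤ n, supNorm (T k - bellman P r (Q k)) ≤ ε)
    (hTQ : ∀ k, 1 ≤ k → k ≤ n → spanSN (T k - T (k - 1)) ≤ spanSN (Q k - Q (k - 1)))
    (ρ : ℕ → ℝ) (hρ : ∀ j, ρ j = 2 * spanSN (Q 0 - Qstar) + (2 / 3) * ε * (j : ℝ)) :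
    ∀ k, 1 ≤ k → k ≤ n →
      spanSN (Q k - Q (k - 1)) ≤
        (2 / ((k : ℝ) * ((k : ℝ) + 1))) * ∑ i ∈ Finset.Icc 1 k, ρ (i + 2) := by
  set D0 : ℝ := spanSN (Q 0 - Qstar) with hD0
  have hD0nn : 0 ≤ D0 := spanSN_nonneg _
  -- span of the error term is ≤ 2ε
  have herr : ∀ j ≤ n, spanSN (T j - bellman P r (Q j)) ≤ 2 * ε := by
    intro j hj
    calc spanSN (T j - bellman P r (Q j)) ≤ 2 * supNorm (T j - bellman P r (Q j)) :=
          spanSN_le_two_supNorm _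
      _ ≤ 2 * ε := by have := happrox j hj; linarith
  -- span of gstar • 1 is 0
  have hg1 : spanSN (gstar • (1 : S × A → ℝ)) = 0 := by
    have : (gstar • (1 : S × A → ℝ)) = fun _ => gstar := by funext sa; simp
    rw [this, spanSN_const]
  -- T j − Qstar bound
  have hTstar : ∀ j ≤ n, spanSN (T j - Qstar) ≤ 2 * ε + spanSN (Q j - Qstar) := by
    intro j hj
    have hdecomp : T j - Qstar =
        (T j - bellman P r (Q j)) + (bellman P r (Q j) - bellman P r Qstar)
          + gstar • (1 : S × A → ℝ) := by
      funext sa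
      have := congrFun hstar sa
      simp only [Pi.add_apply, Pi.sub_apply, Pi.smul_apply, Pi.one_apply,
        smul_eq_mul] at this ⊢
      linarith
    rw [hdecomp]
    calc spanSN ((T j - bellman P r (Q j)) + (bellman P r (Q j) - bellman P r Qstar)
          + gstar • (1 : S × A → ℝ))
        ≤ spanSN ((T j - bellman P r (Q j)) + (bellman P r (Q j) - bellman P r Qstar))
          + spanSN (gstar • (1 : S × A → ℝ)) := spanSN_add_le _ _
      _ ≤ spanSN (T j - bellman P r (Q j)) + spanSN (bellman P r (Q j) - bellman P r Qstar)
          + 0 := by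
          have := spanSN_add_le (T j - bellman P r (Q j))
            (bellman P r (Q j) - bellman P r Qstar)
          rw [hg1]; linarith
      _ ≤ 2 * ε + spanSN (Q j - Qstar) := by
          have h1 := herr j hj
          have h2 := bellman_nonexpansive P hne hsub r (Q j) Qstar
          linarith
  -- Lemma A2
  have hA2 : ∀ j ≤ n, spanSN (Q j - Qstar) ≤ D0 + (2/3) * ε * j := by
    intro j
    induction j with
    | zero => intro _; simp [hD0]
    | succ k ih =>
      intro hk
      have hk' : k ≤ n := by omega
      have ihk := ih hk'
      have hr := hrec (k + 1) (by omega) hk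
      have hQ : Q (k+1) - Qstar = (2/((k:ℝ)+3)) • (Q 0 - Qstar)
          + (((k:ℝ)+1)/((k:ℝ)+3)) • (T k - Qstar) := by
        funext sa
        have hr' := congrFun hr sa
        simp only [Nat.add_sub_cancel, Pi.add_apply, Pi.sub_apply, Pi.smul_apply,
          smul_eq_mul, Nat.cast_add, Nat.cast_one] at hr' ⊢
        rw [hr']
        have h3 : ((k:ℝ) + 3) ≠ 0 := by positivity
        have h2 : ((k:ℝ) + 1 + 2) = (k:ℝ) + 3 := by ring
        rw [h2]
        field_simp
        ring
      have hs1 : spanSN (Q (k+1) - Qstar) ≤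
          (2/((k:ℝ)+3)) * spanSN (Q 0 - Qstar)
          + (((k:ℝ)+1)/((k:ℝ)+3)) * spanSN (T k - Qstar) := by
        rw [hQ]
        have t1 := spanSN_add_le ((2/((k:ℝ)+3)) • (Q 0 - Qstar))
          ((((k:ℝ)+1)/((k:ℝ)+3)) • (T k - Qstar))
        have t2 := spanSN_smul_le (2/((k:ℝ)+3)) (by positivity) (Q 0 - Qstar)
        have t3 := spanSN_smul_le (((k:ℝ)+1)/((k:ℝ)+3)) (by positivity) (T k - Qstar)
        linarith
      have hs2 := hTstar k hk'
      have hc1 : (0:ℝ) < (k:ℝ) + 3 := by positivity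
      have hcoef : (0:ℝ) ≤ ((k:ℝ)+1)/((k:ℝ)+3) := by positivity
      have hs3 : (((k:ℝ)+1)/((k:ℝ)+3)) * spanSN (T k - Qstar) ≤
          (((k:ℝ)+1)/((k:ℝ)+3)) * (2 * ε + (D0 + (2/3) * ε * k)) := by
        apply mul_le_mul_of_nonneg_left _ hcoef
        linarith
      have hfin : (2/((k:ℝ)+3)) * D0
          + (((k:ℝ)+1)/((k:ℝ)+3)) * (2 * ε + (D0 + (2/3) * ε * k))
          = D0 + (2/3) * ε * ((k:ℝ)+1) := by
        field_simp
        ring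
      push_cast
      rw [← hD0] at hs1
      linarith
  -- span (T j - Q 0) ≤ ρ (j+3)
  have hT0ρ : ∀ j ≤ n, spanSN (T j - Q 0) ≤ ρ (j + 3) := by
    intro j hj
    have hdecomp : T j - Q 0 = (T j - Qstar) + (-(Q 0 - Qstar)) := by
      funext sa; simp
    have h1 := spanSN_add_le (T j - Qstar) (-(Q 0 - Qstar))
    rw [spanSN_neg] at h1
    have h2 := hTstar j hj
    have h3 := hA2 j hj
    rw [hρ (j + 3), hdecomp]
    push_cast
    linarith
  -- ρ is monotone and nonneg
  have hρmono : ∀ i j : ℕ, i ≤ j → ρ i ≤ ρ j := by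
    intro i j hij
    rw [hρ i, hρ j]
    have : (i:ℝ) ≤ (j:ℝ) := by exact_mod_cast hij
    nlinarith
  have hρnn : ∀ j : ℕ, 0 ≤ ρ j := by
    intro j; rw [hρ j]; positivity
  -- main induction
  intro k hk1
  induction k, hk1 using Nat.le_induction with
  | base =>
    intro hn
    have hr := hrec 1 le_rfl hn
    have hQ1 : Q 1 - Q 0 = (1/3 : ℝ) • (T 0 - Q 0) := by
      funext sa
      have hr' := congrFun hr sa
      norm_num at hr' ⊢
      rw [hr']; ring
    have h1 : spanSN (Q 1 - Q 0) ≤ (1/3) * spanSN (T 0 - Q 0) := by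
      rw [hQ1]; exact spanSN_smul_le _ (by norm_num) _
    have h2 := hT0ρ 0 (by omega)
    have h3 := hρnn 3
    have hsum : ∑ i ∈ Finset.Icc 1 1, ρ (i + 2) = ρ 3 := by simp
    show spanSN (Q 1 - Q (1-1)) ≤ (2 / ((1:ℕ) * ((1:ℕ) + 1) : ℝ)) * ∑ i ∈ Finset.Icc 1 1, ρ (i+2)
    norm_num [hsum]
    linarith
  | succ k hk ih =>
    intro hn
    have hkn : k ≤ n := by omega
    have ihk := ih hkn
    obtain ⟨j, rfl⟩ : ∃ j, k = j + 1 := ⟨k - 1, by omega⟩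
    set κ : ℝ := ((j:ℝ) + 1) with hκ
    have hκ1 : (1:ℝ) ≤ κ := by
      have : (0:ℝ) ≤ (j:ℝ) := Nat.cast_nonneg j
      rw [hκ]; linarith
    have hκ0 : (0:ℝ) < κ := by linarith
    -- decomposition of Q (k+1) - Q k
    have hr1 := hrec (j + 2) (by omega) hn
    have hr2 := hrec (j + 1) (by omega) hkn
    have hdec : Q (j+2) - Q (j+1) =
        ((κ+1)/(κ+3)) • (T (j+1) - T j) + (2/((κ+2)*(κ+3))) • (T j - Q 0) := by
      funext sa
      have h1 := congrFun hr1 sa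
      rw [show j + 2 - 1 = j + 1 by omega] at h1
      have h2 := congrFun hr2 sa
      simp only [Nat.add_sub_cancel, Pi.add_apply, Pi.sub_apply, Pi.smul_apply,
        smul_eq_mul, Nat.cast_add, Nat.cast_ofNat, Nat.cast_one] at h1 h2 ⊢
      rw [h1, h2, hκ]
      have e2 : ((j:ℝ) + 2 + 2) = (j:ℝ) + 4 := by ring
      have n1 : ((j:ℝ) + 1 + 2) ≠ 0 := by positivity
      have n2 : ((j:ℝ) + 2 + 2) ≠ 0 := by positivity
      field_simp
      ring
    have hstep : spanSN (Q (j+2) - Q (j+1)) ≤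
        ((κ+1)/(κ+3)) * spanSN (T (j+1) - T j) + (2/((κ+2)*(κ+3))) * spanSN (T j - Q 0) := by
      rw [hdec]
      have t1 := spanSN_add_le (((κ+1)/(κ+3)) • (T (j+1) - T j))
        ((2/((κ+2)*(κ+3))) • (T j - Q 0))
      have t2 := spanSN_smul_le ((κ+1)/(κ+3)) (by positivity) (T (j+1) - T j)
      have t3 := spanSN_smul_le (2/((κ+2)*(κ+3))) (by positivity) (T j - Q 0)
      linarith
    have hTT : spanSN (T (j+1) - T j) ≤ spanSN (Q (j+1) - Q j) := by
      have := hTQ (j+1) (by omega) hkn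
      simpa using this
    have hTjQ0 : spanSN (T j - Q 0) ≤ ρ (j + 3) := hT0ρ j (by omega)
    -- the inductive bound
    have hQQ : spanSN (Q (j+1) - Q j) ≤
        (2 / (κ * (κ + 1))) * ∑ i ∈ Finset.Icc 1 (j+1), ρ (i + 2) := by
      have := ihk
      simp only [Nat.add_sub_cancel] at this
      convert this using 3 <;> push_cast [hκ] <;> ring
    -- sum bound
    set x : ℝ := ∑ i ∈ Finset.Icc 1 (j+1), ρ (i + 2) with hx
    set a : ℝ := ρ (j + 3) with ha
    set b : ℝ := ρ (j + 4) with hb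
    have hxa : x ≤ κ * a := by
      rw [hx]
      calc ∑ i ∈ Finset.Icc 1 (j+1), ρ (i + 2) ≤
          ∑ i ∈ Finset.Icc 1 (j+1), a := by
            apply Finset.sum_le_sum
            intro i hi
            rw [ha]
            exact hρmono _ _ (by simp at hi; omega)
        _ = κ * a := by
            rw [Finset.sum_const, Nat.card_Icc, hκ]
            simp only [Nat.add_sub_cancel, nsmul_eq_mul]
            push_cast
            ring
    have hab : a ≤ b := hρmono _ _ (by omega)
    have han : 0 ≤ a := hρnn _
    have hxn : 0 ≤ x := by
      rw [hx]; exact Finset.sum_nonneg fun i _ => hρnn _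
    -- final arithmetic
    have hsumsplit : ∑ i ∈ Finset.Icc 1 (j+2), ρ (i + 2) = x + b := by
      rw [hx, hb]
      rw [Finset.sum_Icc_succ_top (by omega : 1 ≤ j + 2)]
    have hgoalRHS : (2 / ((↑(j+2):ℝ) * ((↑(j+2):ℝ) + 1))) * ∑ i ∈ Finset.Icc 1 (j+2), ρ (i+2)
        = (2 / ((κ+1) * (κ+2))) * (x + b) := by
      rw [hsumsplit, hκ]; push_cast; ring_nf
    have hkey : ((κ+1)/(κ+3)) * ((2 / (κ * (κ + 1))) * x) + (2/((κ+2)*(κ+3))) * a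
        ≤ (2 / ((κ+1) * (κ+2))) * (x + b) := by
      rw [← sub_nonneg]
      have hexp : (2 / ((κ+1) * (κ+2))) * (x + b)
          - (((κ+1)/(κ+3)) * ((2 / (κ * (κ + 1))) * x) + (2/((κ+2)*(κ+3))) * a)
          = (2*b*κ*(κ+3) - 4*x - 2*a*κ*(κ+1)) / (κ*(κ+1)*(κ+2)*(κ+3)) := by
        field_simp
        ring
      rw [hexp]
      apply div_nonneg _ (by positivity)
      nlinarith [mul_nonneg (mul_nonneg (sub_nonneg.2 hab) hκ0.le) (by linarith : (0:ℝ) ≤ κ+3),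
        mul_nonneg (mul_nonneg (sub_nonneg.2 hab) hκ0.le) (by linarith : (0:ℝ) ≤ κ+1)]
    have hfinal : spanSN (Q (j+2) - Q (j+1)) ≤ (2 / ((κ+1) * (κ+2))) * (x + b) := by
      have m1 : ((κ+1)/(κ+3)) * spanSN (T (j+1) - T j) ≤
          ((κ+1)/(κ+3)) * ((2 / (κ * (κ + 1))) * x) := by
        apply mul_le_mul_of_nonneg_left _ (by positivity)
        calc spanSN (T (j+1) - T j) ≤ spanSN (Q (j+1) - Q j) := hTT
          _ ≤ (2 / (κ * (κ + 1))) * x := hQQ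
      have m2 : (2/((κ+2)*(κ+3))) * spanSN (T j - Q 0) ≤ (2/((κ+2)*(κ+3))) * a := by
        apply mul_le_mul_of_nonneg_left _ (by positivity)
        rw [ha]; exact hTjQ0
      linarith
    exact le_of_le_of_eq hfinal hgoalRHS.symm
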